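/- Let M_φ be tasks r_w(s,a)=φ(s,a)ᵀw on a common finite backbone with γ ∈ [0,1). Let π*_j be an optimal policy of task w_j, Q_i^{π*_j} its value in task w_i, Q*_i the optimal value of task w_i, and φ_max = max_{s,a}‖φ(s,a)‖₂. Then for all (s,a): Q*_i(s,a) − Q_i^{π*_j}(s,a) ≤ (2 φ_max/(1−γ)) ‖w_i − w_j‖₂. -/

import Mathlib

open Finset

private lemma contraction_bound_aux
    {S A : Type*} [Fintype S] [Fintype A] [Nonempty S] [Nonempty A]
    (D : S → A → ℝ) (ε γ : ℝ) (hγ0 : 0 ≤ γ) (hγ1 : γ < 1)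
    (h : ∀ M : ℝ, (∀ s a, |D s a| ≤ M) → ∀ s a, |D s a| ≤ ε + γ * M) :
    ∀ s a, |D s a| ≤ ε / (1 - γ) := by
  obtain ⟨p0, hp0⟩ := Finite.exists_max (fun q : S × A => |D q.1 q.2|)
  set M := |D p0.1 p0.2| with hM
  have hall : ∀ s a, |D s a| ≤ M := fun s a => hp0 (s, a)
  have hMle : M ≤ ε + γ * M := h M hall p0.1 p0.2
  have h1γ : 0 < 1 - γ := by linarith
  have hMbd : M ≤ ε / (1 - γ) := by
    rw [le_div_iff₀ h1γ]; nlinarith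
  exact fun s a => (hall s a).trans hMbd

theorem transfer_loss_weight_bound
    {S A : Type*} [Fintype S] [Fintype A] [Nonempty S] [Nonempty A]
    {d : ℕ}
    (p : S → A → S → ℝ)
    (hp0 : ∀ s a s', 0 ≤ p s a s') (hp1 : ∀ s a, ∑ s', p s a s' = 1)
    (γ : ℝ) (hγ0 : 0 ≤ γ) (hγ1 : γ < 1)
    (φ : S → A → EuclideanSpace ℝ (Fin d))
    (φmax : ℝ) (hφmax : ∀ s a, ‖φ s a‖ ≤ φmax)
    (wi wj : EuclideanSpace ℝ (Fin d))
    -- Q*_i : optimal value of task wᵢ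
    (Qstari : S → A → ℝ)
    (hQstari : ∀ s a, Qstari s a =
      (inner ℝ (φ s a) wi : ℝ) + γ * ∑ s', p s a s' * ⨆ b, Qstari s' b)
    -- π*_j : optimal policy of task w_j
    (πj : S → A)
    (Qstarj : S → A → ℝ)
    (hQstarj : ∀ s a, Qstarj s a =
      (inner ℝ (φ s a) wj : ℝ) + γ * ∑ s', p s a s' * ⨆ b, Qstarj s' b)
    (hπjopt : ∀ s a, Qstarj s a =
      (inner ℝ (φ s a) wj : ℝ) + γ * ∑ s', p s a s' * Qstarj s' (πj s'))
    -- Q_i^{π*_j} : value of π*_j in task wᵢ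
    (Qij : S → A → ℝ)
    (hQij : ∀ s a, Qij s a =
      (inner ℝ (φ s a) wi : ℝ) + γ * ∑ s', p s a s' * Qij s' (πj s')) :
    ∀ s a, Qstari s a - Qij s a ≤ 2 * φmax / (1 - γ) * ‖wi - wj‖ := by
  set ε : ℝ := φmax * ‖wi - wj‖ with hε
  have h1γ : 0 < 1 - γ := by linarith
  -- reward difference bound
  have hrew : ∀ s a, |(inner ℝ (φ s a) wi : ℝ) - (inner ℝ (φ s a) wj : ℝ)| ≤ ε := by
    intro s a
    have : (inner ℝ (φ s a) wi : ℝ) - (inner ℝ (φ s a) wj : ℝ)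
        = (inner ℝ (φ s a) (wi - wj) : ℝ) := by rw [inner_sub_right]
    rw [this]
    calc |(inner ℝ (φ s a) (wi - wj) : ℝ)| ≤ ‖φ s a‖ * ‖wi - wj‖ :=
          abs_real_inner_le_norm _ _
      _ ≤ φmax * ‖wi - wj‖ := by
          exact mul_le_mul_of_nonneg_right (hφmax s a) (norm_nonneg _)
  -- generic step: expected value difference bounded by M
  have hsum : ∀ (f : S → ℝ) (M : ℝ) (s : S) (a : A),
      (∀ s', |f s'| ≤ M) → |∑ s', p s a s' * f s'| ≤ M := by
    intro f M s a hf
    calc |∑ s', p s a s' * f s'| ≤ ∑ s', |p s a s' * f s'| :=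
          Finset.abs_sum_le_sum_abs _ _
      _ ≤ ∑ s', p s a s' * M := by
          apply Finset.sum_le_sum
          intro s' _
          rw [abs_mul, abs_of_nonneg (hp0 s a s')]
          exact mul_le_mul_of_nonneg_left (hf s') (hp0 s a s')
      _ = M := by rw [← Finset.sum_mul, hp1 s a, one_mul]
  -- Bound 1: |Qstarj - Qij| ≤ ε/(1-γ)  (same policy, different rewards)
  have hbd1 : ∀ s a, |Qstarj s a - Qij s a| ≤ ε / (1 - γ) := by
    apply contraction_bound_aux _ _ _ hγ0 hγ1
    intro M hall s a
    have hdec : Qstarj s a - Qij s a =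
        ((inner ℝ (φ s a) wj : ℝ) - (inner ℝ (φ s a) wi : ℝ))
        + γ * ∑ s', p s a s' * (Qstarj s' (πj s') - Qij s' (πj s')) := by
      have e : ∑ s', p s a s' * (Qstarj s' (πj s') - Qij s' (πj s'))
          = (∑ s', p s a s' * Qstarj s' (πj s'))
            - ∑ s', p s a s' * Qij s' (πj s') := by
        rw [← Finset.sum_sub_distrib]
        exact Finset.sum_congr rfl (fun _ _ => mul_sub _ _ _)
      rw [hπjopt s a, hQij s a, e]; ring
    rw [hdec]
    calc |((inner ℝ (φ s a) wj : ℝ) - (inner ℝ (φ s a) wi : ℝ))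
        + γ * ∑ s', p s a s' * (Qstarj s' (πj s') - Qij s' (πj s'))|
        ≤ |(inner ℝ (φ s a) wj : ℝ) - (inner ℝ (φ s a) wi : ℝ)|
          + |γ * ∑ s', p s a s' * (Qstarj s' (πj s') - Qij s' (πj s'))| :=
          abs_add_le _ _
      _ ≤ ε + γ * M := by
          gcongr
          · have := hrew s a; rwa [abs_sub_comm] at this
          · rw [abs_mul, abs_of_nonneg hγ0]
            exact mul_le_mul_of_nonneg_left
              (hsum _ M s a (fun s' => hall s' (πj s'))) hγ0
  -- sup difference bound
  have hsupd : ∀ (f g : A → ℝ) (M : ℝ), (∀ b, |f b - g b| ≤ M) →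
      |(⨆ b, f b) - ⨆ b, g b| ≤ M := by
    intro f g M hfg
    rw [abs_le]
    constructor
    · rw [neg_le, neg_sub]
      rw [sub_le_iff_le_add']
      apply ciSup_le
      intro b
      have : g b ≤ f b + M := by have := abs_le.1 (hfg b); linarith [this.1]
      exact this.trans (add_le_add_left (le_ciSup (Set.Finite.bddAbove (Set.finite_range f)) b) M)
    · rw [sub_le_iff_le_add']
      apply ciSup_le
      intro b
      have : f b ≤ g b + M := by have := abs_le.1 (hfg b); linarith [this.2]
      exact this.trans (add_le_add_left (le_ciSup (Set.Finite.bddAbove (Set.finite_range g)) b) M)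
  -- Bound 2: |Qstari - Qstarj| ≤ ε/(1-γ)  (both optimal)
  have hbd2 : ∀ s a, |Qstari s a - Qstarj s a| ≤ ε / (1 - γ) := by
    apply contraction_bound_aux _ _ _ hγ0 hγ1
    intro M hall s a
    have hdec : Qstari s a - Qstarj s a =
        ((inner ℝ (φ s a) wi : ℝ) - (inner ℝ (φ s a) wj : ℝ))
        + γ * ∑ s', p s a s' * ((⨆ b, Qstari s' b) - ⨆ b, Qstarj s' b) := by
      have e : ∑ s', p s a s' * ((⨆ b, Qstari s' b) - ⨆ b, Qstarj s' b)
          = (∑ s', p s a s' * ⨆ b, Qstari s' b)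
            - ∑ s', p s a s' * ⨆ b, Qstarj s' b := by
        rw [← Finset.sum_sub_distrib]
        exact Finset.sum_congr rfl (fun _ _ => mul_sub _ _ _)
      rw [hQstari s a, hQstarj s a, e]; ring
    rw [hdec]
    calc |((inner ℝ (φ s a) wi : ℝ) - (inner ℝ (φ s a) wj : ℝ))
        + γ * ∑ s', p s a s' * ((⨆ b, Qstari s' b) - ⨆ b, Qstarj s' b)|
        ≤ |(inner ℝ (φ s a) wi : ℝ) - (inner ℝ (φ s a) wj : ℝ)|
          + |γ * ∑ s', p s a s' * ((⨆ b, Qstari s' b) - ⨆ b, Qstarj s' b)| :=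
          abs_add_le _ _
      _ ≤ ε + γ * M := by
          gcongr
          · exact hrew s a
          · rw [abs_mul, abs_of_nonneg hγ0]
            refine mul_le_mul_of_nonneg_left (hsum _ M s a ?_) hγ0
            intro s'
            exact hsupd _ _ M (fun b => hall s' b)
  intro s a
  have h1 := abs_le.1 (hbd1 s a)
  have h2 := abs_le.1 (hbd2 s a)
  have : Qstari s a - Qij s a ≤ 2 * (ε / (1 - γ)) := by linarith [h1.2, h2.2]
  calc Qstari s a - Qij s a ≤ 2 * (ε / (1 - γ)) := this
    _ = 2 * φmax / (1 - γ) * ‖wi - wj‖ := by rw [hε]; field_simp
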